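/- For positive integers n, p, k with 1 ≤ k ≤ n and 1 ≤ p ≤ n, the recurrence (n-p+1)·B(n,p-1,k) - p·B(n,p,k) = (n/(n-1))·(n-2p+1)·B(n-1,p-1,k) holds, where B(n,p,k) = (n/k) · Σ_{r≥0} C(p,r)·C(n-p,r)·C(n-r-1,k-r-1). -/

import Mathlib

open Finset

/-- Binomial coefficient `C(a,b)` for integers, with `C(a,b) = 0` unless `0 ≤ b ≤ a`. -/
def C (a b : ℤ) : ℚ := if 0 ≤ b ∧ b ≤ a then (Nat.choose a.toNat b.toNat : ℚ) else 0

/-- `B(n,p,k) = (n/k) · Σ_{r≥0} C(p,r)·C(n-p,r)·C(n-r-1,k-r-1)`. -/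
def B (n p k : ℕ) : ℚ :=
  ((n : ℚ) / k) * ∑ r ∈ range (n + 1),
    C p r * C ((n : ℤ) - p) r * C ((n : ℤ) - r - 1) ((k : ℤ) - r - 1)


lemma C_neg (a b : ℤ) (h : b < 0) : C a b = 0 := if_neg (by omega)

lemma C_lt (a b : ℤ) (h : a < b) : C a b = 0 := if_neg (by omega)

lemma C_nat (a b : ℕ) : C (a : ℤ) (b : ℤ) = (a.choose b : ℚ) := by
  unfold C
  split_ifs with h
  · simp
  · have : a < b := by omega
    simp [Nat.choose_eq_zero_of_lt this]

lemma C_pascal (a b : ℤ) (ha : 1 ≤ a) : C a b = C (a-1) b + C (a-1) (b-1) := by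
  rcases lt_trichotomy b 0 with hb | hb | hb
  · rw [C_neg _ _ hb, C_neg _ _ hb, C_neg _ _ (by omega)]; ring
  · subst hb
    rw [C_neg _ _ (by norm_num : (0:ℤ)-1 < 0)]
    unfold C
    rw [if_pos ⟨le_refl 0, by omega⟩, if_pos ⟨le_refl 0, by omega⟩]
    simp
  · obtain ⟨a', rfl⟩ : ∃ a' : ℕ, a = (a' : ℤ) + 1 := ⟨(a-1).toNat, by omega⟩
    obtain ⟨b', rfl⟩ : ∃ b' : ℕ, b = (b' : ℤ) + 1 := ⟨(b-1).toNat, by omega⟩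
    have e1 : ((a' : ℤ) + 1) - 1 = (a' : ℤ) := by ring
    have e2 : ((b' : ℤ) + 1) - 1 = (b' : ℤ) := by ring
    rw [e1, e2]
    rw [show ((a' : ℤ) + 1) = ((a'+1 : ℕ) : ℤ) from by push_cast; ring,
        show ((b' : ℤ) + 1) = ((b'+1 : ℕ) : ℤ) from by push_cast; ring]
    rw [C_nat, C_nat, C_nat]
    rw [Nat.choose_succ_succ]
    push_cast
    ring

lemma C_pascal' (a b : ℤ) (ha : 0 ≤ a) : C (a+1) b = C a b + C a (b-1) := by
  have := C_pascal (a+1) b (by omega)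
  simpa using this

lemma C_absorb (a b : ℤ) : (b : ℚ) * C a b = ((a : ℚ) - (b : ℚ) + 1) * C a (b-1) := by
  rcases lt_trichotomy b 0 with hb | hb | hb
  · rw [C_neg _ _ hb, C_neg _ _ (by omega)]; ring
  · subst hb; rw [C_neg _ _ (by norm_num : (0:ℤ)-1 < 0)]; push_cast; ring
  · rcases lt_or_ge a b with hab | hab
    · rw [C_lt _ _ hab]
      rcases lt_or_ge a (b-1) with h2 | h2
      · rw [C_lt _ _ h2]; ring
      · have : a = b - 1 := by omega
        subst this
        push_cast
        ring
    · obtain ⟨a', rfl⟩ : ∃ a' : ℕ, a = (a' : ℤ) := ⟨a.toNat, by omega⟩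
      obtain ⟨b', rfl⟩ : ∃ b' : ℕ, b = (b' : ℤ) + 1 := ⟨(b-1).toNat, by omega⟩
      have e2 : ((b' : ℤ) + 1) - 1 = ((b' : ℕ) : ℤ) := by ring
      rw [e2]
      rw [show ((b' : ℤ) + 1) = ((b'+1 : ℕ) : ℤ) from by push_cast; ring]
      rw [C_nat, C_nat]
      have hb' : b' + 1 ≤ a' := by exact_mod_cast hab
      have := Nat.succ_sub_one
      have h := Nat.choose_succ_right_eq a' b'
      -- a'.choose (b'+1) * (b'+1) = a'.choose b' * (a' - b')
      have hcast : ((a' - b' : ℕ) : ℚ) = (a' : ℚ) - b' := by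
        have : b' ≤ a' := by omega
        push_cast [this]; ring
      have h2 : (a'.choose (b'+1) : ℚ) * ((b':ℚ)+1) = (a'.choose b' : ℚ) * ((a':ℚ) - b') := by
        have hc := congrArg (Nat.cast : ℕ → ℚ) h
        push_cast at hc
        rw [hcast] at hc
        exact hc
      push_cast
      linarith [h2]

lemma dagger (n p r : ℕ) :
    ((n:ℚ)-p+1) * C ((p:ℤ)-1) (r:ℤ) * C ((n:ℤ)-(p:ℤ)) ((r:ℤ)-1)
  - (p:ℚ) * C ((p:ℤ)-1) ((r:ℤ)-1) * C ((n:ℤ)-(p:ℤ)) (r:ℤ)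
  + ((n:ℚ)-2*p+1) * C ((p:ℤ)-1) ((r:ℤ)-1) * C ((n:ℤ)-(p:ℤ)) ((r:ℤ)-1) = 0 := by
  rcases Nat.eq_zero_or_pos r with hr | hr
  · subst hr
    simp only [Nat.cast_zero]
    rw [C_neg ((p:ℤ)-1) ((0:ℤ)-1) (by norm_num), C_neg ((n:ℤ)-(p:ℤ)) ((0:ℤ)-1) (by norm_num)]
    ring
  · have hr' : (r:ℚ) ≠ 0 := by positivity
    apply mul_left_cancel₀ hr'
    rw [mul_zero]
    have h1 := C_absorb ((p:ℤ)-1) (r:ℤ)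
    have h2 := C_absorb ((n:ℤ)-(p:ℤ)) (r:ℤ)
    push_cast at h1 h2
    linear_combination ((n:ℚ)-p+1) * C ((n:ℤ)-(p:ℤ)) ((r:ℤ)-1) * h1
      - (p:ℚ) * C ((p:ℤ)-1) ((r:ℤ)-1) * h2

def G (n p k r : ℕ) : ℚ :=
  ((n:ℚ)-2*p+1) * C ((p:ℤ)-1) ((r:ℤ)-1) * C ((n:ℤ)-(p:ℤ)) ((r:ℤ)-1)
    * C ((n:ℤ)-(r:ℤ)-1) ((k:ℤ)-(r:ℤ)-1)

lemma key (n p k r : ℕ) (hp : 1 ≤ p) (hpn : p ≤ n) (hk : 1 ≤ k) (hkn : k ≤ n)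
    (hn : 2 ≤ n) :
    (((n:ℚ)-p+1) * (C ((p:ℤ)-1) (r:ℤ) * C ((n:ℤ)-(p:ℤ)+1) (r:ℤ)
        * C ((n:ℤ)-(r:ℤ)-1) ((k:ℤ)-(r:ℤ)-1))
      - (p:ℚ) * (C (p:ℤ) (r:ℤ) * C ((n:ℤ)-(p:ℤ)) (r:ℤ)
        * C ((n:ℤ)-(r:ℤ)-1) ((k:ℤ)-(r:ℤ)-1)))
      - ((n:ℚ)-2*p+1) * (C ((p:ℤ)-1) (r:ℤ) * C ((n:ℤ)-(p:ℤ)) (r:ℤ)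
        * C ((n:ℤ)-(r:ℤ)-2) ((k:ℤ)-(r:ℤ)-1))
    = G n p k (r+1) - G n p k r := by
  have hG : G n p k (r+1) = ((n:ℚ)-2*p+1) * C ((p:ℤ)-1) (r:ℤ) * C ((n:ℤ)-(p:ℤ)) (r:ℤ)
      * C ((n:ℤ)-(r:ℤ)-2) ((k:ℤ)-(r:ℤ)-2) := by
    unfold G
    rw [show ((r+1:ℕ):ℤ) - 1 = (r:ℤ) from by push_cast; ring,
        show (n:ℤ)-((r+1:ℕ):ℤ)-1 = (n:ℤ)-(r:ℤ)-2 from by push_cast; ring,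
        show (k:ℤ)-((r+1:ℕ):ℤ)-1 = (k:ℤ)-(r:ℤ)-2 from by push_cast; ring]
  rw [hG]
  unfold G
  have h1 : C (p:ℤ) (r:ℤ) = C ((p:ℤ)-1) (r:ℤ) + C ((p:ℤ)-1) ((r:ℤ)-1) :=
    C_pascal (p:ℤ) (r:ℤ) (by exact_mod_cast hp)
  have h2 : C ((n:ℤ)-(p:ℤ)+1) (r:ℤ) = C ((n:ℤ)-(p:ℤ)) (r:ℤ) + C ((n:ℤ)-(p:ℤ)) ((r:ℤ)-1) :=
    C_pascal' ((n:ℤ)-(p:ℤ)) (r:ℤ) (by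
      have : (p:ℤ) ≤ (n:ℤ) := by exact_mod_cast hpn
      omega)
  have hd := dagger n p r
  rcases le_or_gt (r + 2) n with hr | hr
  · -- interior case: Pascal on the third factor
    have h3 : C ((n:ℤ)-(r:ℤ)-1) ((k:ℤ)-(r:ℤ)-1)
        = C ((n:ℤ)-(r:ℤ)-2) ((k:ℤ)-(r:ℤ)-1) + C ((n:ℤ)-(r:ℤ)-2) ((k:ℤ)-(r:ℤ)-2) := by
      have h := C_pascal ((n:ℤ)-(r:ℤ)-1) ((k:ℤ)-(r:ℤ)-1) (by
        have : (r:ℤ) + 2 ≤ (n:ℤ) := by exact_mod_cast hr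
        omega)
      rw [show (n:ℤ)-(r:ℤ)-1-1 = (n:ℤ)-(r:ℤ)-2 from by ring,
          show (k:ℤ)-(r:ℤ)-1-1 = (k:ℤ)-(r:ℤ)-2 from by ring] at h
      exact h
    rw [h1, h2, h3]
    linear_combination (C ((n:ℤ)-(r:ℤ)-2) ((k:ℤ)-(r:ℤ)-1)
      + C ((n:ℤ)-(r:ℤ)-2) ((k:ℤ)-(r:ℤ)-2)) * hd
  · -- boundary case: A·D = 0
    have hAD : C ((p:ℤ)-1) (r:ℤ) * C ((n:ℤ)-(p:ℤ)) (r:ℤ) = 0 := by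
      rcases lt_or_ge ((p:ℤ)-1) (r:ℤ) with h | h
      · rw [C_lt _ _ h]; ring
      · have hpr : (r:ℤ) ≤ (p:ℤ)-1 := h
        rw [C_lt ((n:ℤ)-(p:ℤ)) (r:ℤ) (by omega)]
        ring
    rw [h1, h2]
    linear_combination C ((n:ℤ)-(r:ℤ)-1) ((k:ℤ)-(r:ℤ)-1) * hd
      + ((n:ℚ)-2*p+1) * (C ((n:ℤ)-(r:ℤ)-1) ((k:ℤ)-(r:ℤ)-1)
        - C ((n:ℤ)-(r:ℤ)-2) ((k:ℤ)-(r:ℤ)-1) - C ((n:ℤ)-(r:ℤ)-2) ((k:ℤ)-(r:ℤ)-2)) * hAD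

theorem stmt_10 (n p k : ℕ) (hk : 1 ≤ k) (hkn : k ≤ n) (hp : 1 ≤ p) (hpn : p ≤ n)
    (hn : 2 ≤ n) :
    ((n : ℚ) - p + 1) * B n (p - 1) k - (p : ℚ) * B n p k =
      ((n : ℚ) / ((n : ℚ) - 1)) * ((n : ℚ) - 2 * p + 1) * B (n - 1) (p - 1) k := by
  have hp1 : ((p-1:ℕ):ℤ) = (p:ℤ)-1 := by omega
  have hn1 : ((n-1:ℕ):ℤ) = (n:ℤ)-1 := by omega
  have hn1q : ((n-1:ℕ):ℚ) = (n:ℚ)-1 := by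
    have : ((n-1:ℕ):ℚ) = ((n:ℕ):ℚ) - ((1:ℕ):ℚ) := by
      rw [← Nat.cast_sub (by omega)]
    simpa using this
  have hrange : n - 1 + 1 = n := by omega
  unfold B
  simp only [hp1, hn1, hn1q, hrange]
  rw [show (n:ℤ) - ((p:ℤ)-1) = (n:ℤ)-(p:ℤ)+1 from by ring,
    show (n:ℤ)-1 - ((p:ℤ)-1) = (n:ℤ)-(p:ℤ) from by ring]
  simp only [show ∀ r : ℤ, (n:ℤ)-1 - r - 1 = (n:ℤ)-r-2 from fun _ => by ring]
  set S1 := ∑ r ∈ range (n+1),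
      C ((p:ℤ)-1) (r:ℤ) * C ((n:ℤ)-(p:ℤ)+1) (r:ℤ) * C ((n:ℤ)-(r:ℤ)-1) ((k:ℤ)-(r:ℤ)-1) with hS1
  set S2 := ∑ r ∈ range (n+1),
      C (p:ℤ) (r:ℤ) * C ((n:ℤ)-(p:ℤ)) (r:ℤ) * C ((n:ℤ)-(r:ℤ)-1) ((k:ℤ)-(r:ℤ)-1) with hS2
  set S3 := ∑ r ∈ range n,
      C ((p:ℤ)-1) (r:ℤ) * C ((n:ℤ)-(p:ℤ)) (r:ℤ) * C ((n:ℤ)-(r:ℤ)-2) ((k:ℤ)-(r:ℤ)-1) with hS3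
  have htel : ∑ r ∈ range (n+1), (G n p k (r+1) - G n p k r) = 0 := by
    rw [Finset.sum_range_sub (fun r => G n p k r)]
    have hG0 : G n p k 0 = 0 := by
      unfold G
      rw [C_neg ((p:ℤ)-1) (((0:ℕ):ℤ)-1) (by norm_num)]
      ring
    have hGn : G n p k (n+1) = 0 := by
      unfold G
      rw [show ((n+1:ℕ):ℤ)-1 = (n:ℤ) from by push_cast; ring]
      rw [C_lt ((p:ℤ)-1) (n:ℤ) (by omega)]
      ring
    rw [hG0, hGn]; ring
  have hkey : ∑ r ∈ range (n+1),
      ((((n:ℚ)-p+1) * (C ((p:ℤ)-1) (r:ℤ) * C ((n:ℤ)-(p:ℤ)+1) (r:ℤ)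
          * C ((n:ℤ)-(r:ℤ)-1) ((k:ℤ)-(r:ℤ)-1))
        - (p:ℚ) * (C (p:ℤ) (r:ℤ) * C ((n:ℤ)-(p:ℤ)) (r:ℤ)
          * C ((n:ℤ)-(r:ℤ)-1) ((k:ℤ)-(r:ℤ)-1)))
        - ((n:ℚ)-2*p+1) * (C ((p:ℤ)-1) (r:ℤ) * C ((n:ℤ)-(p:ℤ)) (r:ℤ)
          * C ((n:ℤ)-(r:ℤ)-2) ((k:ℤ)-(r:ℤ)-1))) = 0 := by
    rw [Finset.sum_congr rfl (fun r _ => key n p k r hp hpn hk hkn hn)]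
    exact htel
  have hlast : C ((p:ℤ)-1) ((n:ℕ):ℤ) * C ((n:ℤ)-(p:ℤ)) ((n:ℕ):ℤ)
      * C ((n:ℤ)-((n:ℕ):ℤ)-2) ((k:ℤ)-((n:ℕ):ℤ)-1) = 0 := by
    rw [C_lt ((p:ℤ)-1) ((n:ℕ):ℤ) (by omega)]
    ring
  have hext : ∑ r ∈ range (n+1),
      C ((p:ℤ)-1) (r:ℤ) * C ((n:ℤ)-(p:ℤ)) (r:ℤ) * C ((n:ℤ)-(r:ℤ)-2) ((k:ℤ)-(r:ℤ)-1)
      = S3 := by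
    rw [Finset.sum_range_succ, hlast, add_zero]
  have hmain : ((n:ℚ)-p+1) * S1 - (p:ℚ) * S2 - ((n:ℚ)-2*p+1) * S3 = 0 := by
    rw [hS1, hS2, ← hext, Finset.mul_sum, Finset.mul_sum, Finset.mul_sum,
      ← Finset.sum_sub_distrib, ← Finset.sum_sub_distrib]
    exact hkey
  have hk0 : (k:ℚ) ≠ 0 := by positivity
  have hn0 : (n:ℚ) - 1 ≠ 0 := by
    have : (2:ℚ) ≤ (n:ℚ) := by exact_mod_cast hn
    intro h; nlinarith
  field_simp
  linear_combination hmain
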